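/- Let P be the colimit of the sequence of iterated wreath products P₀ = C_p, P_{n+1} = P_n ≀ C_p, along the injections φ_n : P_n → P_{n+1} defined by φ_n(g) = (g,1,...,1) for n odd and φ_n(g) = (g,g,...,g) for n even. Then P has trivial center: Z(P) = 1. -/

import Mathlib

open Pointwise

variable (p : ℕ) [Fact p.Prime]

/-- The cyclic shift automorphism action of `C_p` on the `p`-fold direct power. -/
def shiftHom (P : Type) [Group P] : Multiplicative (ZMod p) →* MulAut (ZMod p → P) where
  toFun k :=
    { toFun := fun f j => f (j + k.toAdd)
      invFun := fun f j => f (j - k.toAdd)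
      left_inv := fun f => funext fun j => by simp
      right_inv := fun f => funext fun j => by simp
      map_mul' := fun f g => rfl }
  map_one' := by
    refine MulEquiv.ext fun f => funext fun j => ?_
    simp
  map_mul' := by
    intro a b
    refine MulEquiv.ext fun f => funext fun j => ?_
    exact congrArg f (add_assoc j a.toAdd b.toAdd).symm

/-- The sequence of iterated wreath products `P₀ = C_p`, `P_{n+1} = P_n ≀ C_p`. -/
def Pseq : ℕ → GrpCat
  | 0 => GrpCat.of (Multiplicative (ZMod p))
  | n + 1 => GrpCat.of ((ZMod p → Pseq n) ⋊[shiftHom p (Pseq n)] Multiplicative (ZMod p))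

/-- The subgroups `Q₀ = 1`, `Q_{n+1} = Q_n ≀ C_p`. -/
def Qseq : ∀ n, Subgroup (Pseq p n)
  | 0 => ⊥
  | n + 1 =>
    { carrier := {x : (ZMod p → Pseq p n) ⋊[shiftHom p (Pseq p n)] Multiplicative (ZMod p) |
        ∀ j, x.left j ∈ Qseq n}
      one_mem' := fun j => (Qseq n).one_mem
      mul_mem' := fun {a b} ha hb j => (Qseq n).mul_mem (ha j) (hb (j + a.right.toAdd))
      inv_mem' := fun {a} ha j => (Qseq n).inv_mem (ha (j + a.right⁻¹.toAdd)) }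

/-- The subgroups `A₀ = P₀`, `A_{n+1} = A_n^{×p}` inside the base of the wreath
product. -/
def Aseq : ∀ n, Subgroup (Pseq p n)
  | 0 => ⊤
  | n + 1 => Subgroup.map
      (SemidirectProduct.inl :
        (ZMod p → Pseq p n) →* (ZMod p → Pseq p n) ⋊[shiftHom p (Pseq p n)] Multiplicative (ZMod p))
      (Subgroup.pi Set.univ (fun _ : ZMod p => Aseq n))

/-- The diagonal homomorphism `g ↦ (g,g,…,g)`. -/
def diagHom (P : Type) [Group P] : P →* (ZMod p → P) where
  toFun g _ := g
  map_one' := rfl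
  map_mul' _ _ := rfl

/-- The connecting maps `φ_n : P_n → P_{n+1}`, given by `g ↦ (g,1,…,1)` for `n`
odd and `g ↦ (g,g,…,g)` for `n` even, landing in the base of the wreath
product. -/
def phi : ∀ n : ℕ, Pseq p n →* Pseq p (n + 1) := fun n =>
  (SemidirectProduct.inl :
      (ZMod p → Pseq p n) →* (ZMod p → Pseq p n) ⋊[shiftHom p (Pseq p n)]
        Multiplicative (ZMod p)).comp
    (if n % 2 = 1 then MonoidHom.mulSingle (fun _ : ZMod p => Pseq p n) 0
     else diagHom p (Pseq p n))

/-- If `P` is a colimit of the sequence of iterated wreath products `P_n` along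
the injections `φ_n` (i.e. `P` is the increasing union of the images of the
`P_n`), then `P` has trivial center. -/
theorem stmt_13 (P : Type) [Group P] (ψ : ∀ n, Pseq p n →* P)
    (hcompat : ∀ n g, ψ (n + 1) (phi p n g) = ψ n g)
    (hinj : ∀ n, Function.Injective (ψ n))
    (hsurj : ∀ x : P, ∃ n g, ψ n g = x) :
    Subgroup.center P = ⊥ := by
  haveI : Fact (1 < p) := ⟨(Fact.out : p.Prime).one_lt⟩
  rw [eq_bot_iff]
  intro z hz
  obtain ⟨n, g, hg⟩ := hsurj z
  obtain ⟨m, hm, a, ha⟩ : ∃ m, m % 2 = 1 ∧ ∃ a : Pseq p m, ψ m a = z := by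
    rcases Nat.even_or_odd n with he | ho
    · exact ⟨n + 1, by have := Nat.even_iff.mp he; omega, phi p n g, by rw [hcompat, hg]⟩
    · exact ⟨n, Nat.odd_iff.mp ho, g, hg⟩
  set b : Pseq p (m + 1) := phi p m a with hb
  have hψb : ψ (m + 1) b = z := by rw [hb, hcompat, ha]
  have hbc : ∀ h : Pseq p (m + 1), b * h = h * b := by
    intro h
    apply hinj (m + 1)
    rw [map_mul, map_mul, hψb]
    exact (Subgroup.mem_center_iff.mp hz (ψ (m + 1) h)).symm
  have hbdef : b = SemidirectProduct.inl (Pi.mulSingle 0 a) := by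
    rw [hb]
    show (SemidirectProduct.inl).comp _ a = _
    rw [if_pos hm]
    rfl
  have key := hbc (SemidirectProduct.inr (Multiplicative.ofAdd (1 : ZMod p)))
  rw [hbdef] at key
  have key' : (SemidirectProduct.inl (Pi.mulSingle (0 : ZMod p) a) *
      SemidirectProduct.inr (Multiplicative.ofAdd (1 : ZMod p)) :
      (ZMod p → Pseq p m) ⋊[shiftHom p (Pseq p m)] Multiplicative (ZMod p)) =
      SemidirectProduct.inr (Multiplicative.ofAdd (1 : ZMod p)) *
      SemidirectProduct.inl (Pi.mulSingle (0 : ZMod p) a) := key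
  have hleft := congrArg SemidirectProduct.left key'
  simp only [SemidirectProduct.mul_left, SemidirectProduct.left_inl,
    SemidirectProduct.left_inr, SemidirectProduct.right_inl,
    SemidirectProduct.right_inr, map_one, mul_one, one_mul] at hleft
  have h0 := congrFun hleft 0
  have ha1 : a = 1 := by
    have h0' : Pi.mulSingle (M := fun _ : ZMod p => (Pseq p m : Type)) (0 : ZMod p) a (0 : ZMod p)
        = Pi.mulSingle (M := fun _ : ZMod p => (Pseq p m : Type)) (0 : ZMod p) a
            ((0 : ZMod p) + 1) := by exact h0
    rw [Pi.mulSingle_eq_same, zero_add, Pi.mulSingle_eq_of_ne one_ne_zero] at h0'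
    exact h0'
  have : z = 1 := by rw [← ha, ha1, map_one]
  rw [this]
  exact Subgroup.one_mem ⊥
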